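/- Let β > 1 and let (d_i)_{i≥1} be the (-β)-expansion of l_β = -β/(β+1). If d_{2i} < d_1 for all integers i ≥ 1, then β is greater than or equal to the golden ratio (1+√5)/2. -/

import Mathlib

/-- The `(-β)`-transformation. -/
noncomputable def Tm (β x : ℝ) : ℝ := -β * x - ⌊-β * x + β / (β + 1)⌋

/-- The digits of the `(-β)`-expansion of `x`, 0-indexed: `dig β x n = x_{n+1}`. -/
noncomputable def dig (β x : ℝ) (n : ℕ) : ℤ := ⌊-β * (Tm β)^[n] x + β / (β + 1)⌋

theorem stmt4 (β : ℝ) (hβ : 1 < β) (d : ℕ → ℤ)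
    (hd : ∀ i, 1 ≤ i → d i = dig β (-β / (β + 1)) (i - 1))
    (h : ∀ i, 1 ≤ i → d (2 * i) < d 1) :
    (1 + Real.sqrt 5) / 2 ≤ β := by
  classical
  by_contra hlt
  push_neg at hlt
  have hs : Real.sqrt 5 ^ 2 = 5 := Real.sq_sqrt (by norm_num)
  have hs0 : (0:ℝ) ≤ Real.sqrt 5 := Real.sqrt_nonneg 5
  have hquad : β ^ 2 < β + 1 := by nlinarith
  have hβ1 : (0:ℝ) < β + 1 := by linarith
  have hβ2 : β < 2 := by nlinarith
  set x : ℝ := -β / (β + 1) with hxdef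
  set T : ℕ → ℝ := fun k => (Tm β)^[k] x with hT
  have hstep : ∀ k, T (k+1) = -β * T k - dig β x k := by
    intro k
    simp only [hT, Function.iterate_succ_apply', Tm, dig]
  have hdig : ∀ k, dig β x k = ⌊-β * T k + β / (β + 1)⌋ := by
    intro k
    simp only [hT, dig]
  have hT0 : T 0 = x := by simp [hT]
  have hd1 : dig β x 0 = 1 := by
    have hx0 : -β * T 0 + β / (β + 1) = β := by
      rw [hT0, hxdef]
      field_simp
    rw [hdig 0, hx0]
    have h1 : (1:ℤ) ≤ ⌊β⌋ := Int.le_floor.mpr (by exact_mod_cast hβ.le)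
    have h2 : ⌊β⌋ < 2 := Int.floor_lt.mpr (by exact_mod_cast hβ2)
    omega
  set c : ℝ := (β^2 - β - 1) / (β + 1) with hcdef
  have hc : c < 0 := div_neg_of_neg_of_pos (by linarith) hβ1
  have hT1 : T 1 = c := by
    rw [hstep 0, hd1, hT0, hxdef, hcdef]
    push_cast
    field_simp
    ring
  have hpow : ∀ m, (∀ k, 1 ≤ k → k ≤ m → dig β x k = 0) →
      T (m+1) = (-β)^m * c := by
    intro m
    induction m with
    | zero => intro _; simpa using hT1
    | succ m ih =>
      intro hz
      have hTm := ih (fun k hk hk' => hz k hk (by omega))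
      rw [hstep (m+1), hz (m+1) (by omega) le_rfl, hTm]
      push_cast
      rw [pow_succ]
      ring
  have hexists : ∃ m, 1 ≤ m ∧ dig β x m ≠ 0 := by
    by_contra hall
    push_neg at hall
    have hz : ∀ k, 1 ≤ k → dig β x k = 0 := fun k hk => hall k hk
    have hcpos : 0 < -c := by linarith
    obtain ⟨n, hn⟩ := pow_unbounded_of_one_lt (1 / ((β+1) * (-c))) hβ
    set m := 2 * (n + 1) with hm
    have hTm : T m = (-β)^(m-1) * c := by
      have := hpow (m-1) (fun k hk _ => hz k hk)
      rwa [show m - 1 + 1 = m by omega] at this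
    have hoddm : Odd (m - 1) := ⟨n, by omega⟩
    have hTmpos : T m = β^(m-1) * (-c) := by
      rw [hTm, hoddm.neg_pow]; ring
    have hdz := hz m (by omega)
    rw [hdig m] at hdz
    have hge : (0:ℝ) ≤ -β * T m + β / (β + 1) :=
      (Set.mem_Ico.mp (Int.floor_eq_zero_iff.mp hdz)).1
    have hle : T m ≤ 1 / (β + 1) := by
      have hβ0 : (0:ℝ) < β := by linarith
      have e : β / (β + 1) = β * (1 / (β + 1)) := by ring
      rw [e] at hge
      nlinarith [hge, hβ0]
    have hbig : 1 / ((β+1) * (-c)) < β ^ (m - 1) :=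
      lt_of_lt_of_le hn (pow_le_pow_right₀ hβ.le (by omega))
    have hkey : 1 / (β + 1) < β ^ (m-1) * (-c) := by
      rw [div_lt_iff₀ hβ1]
      rw [div_lt_iff₀ (mul_pos hβ1 hcpos)] at hbig
      nlinarith
    rw [hTmpos] at hle
    nlinarith
  obtain ⟨m₀, hm₀1, hm₀ne, hzlt⟩ : ∃ m₀, 1 ≤ m₀ ∧ dig β x m₀ ≠ 0 ∧
      ∀ k, 1 ≤ k → k < m₀ → dig β x k = 0 := by
    refine ⟨Nat.find hexists, (Nat.find_spec hexists).1, (Nat.find_spec hexists).2, ?_⟩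
    intro k hk hk'
    by_contra hne
    exact Nat.find_min hexists hk' ⟨hk, hne⟩
  have hTm₀ : T m₀ = (-β)^(m₀-1) * c := by
    have := hpow (m₀-1) (fun k hk hk' => hzlt k hk (by omega))
    rwa [show m₀ - 1 + 1 = m₀ by omega] at this
  rcases Nat.even_or_odd m₀ with heven | hodd
  · -- m₀ even: contradiction, digit must be 0
    obtain ⟨r, hr⟩ := heven
    have hm₀2 : 2 ≤ m₀ := by omega
    have hoddm : Odd (m₀ - 1) := ⟨r - 1, by omega⟩
    have hTpos : T m₀ = β^(m₀-1) * (-c) := by rw [hTm₀, hoddm.neg_pow]; ring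
    have hT0pos : 0 < T m₀ := by
      rw [hTpos]
      exact mul_pos (pow_pos (by linarith) _) (by linarith)
    have hdz := hzlt (m₀ - 1) (by omega) (by omega)
    have hub : -β * T (m₀ - 1) + β/(β+1) < 1 := by
      rw [hdig] at hdz
      exact (Set.mem_Ico.mp (Int.floor_eq_zero_iff.mp hdz)).2
    have hTm₀' : T m₀ = -β * T (m₀ - 1) := by
      have hh := hstep (m₀ - 1)
      rw [hzlt (m₀-1) (by omega) (by omega)] at hh
      rw [show m₀ - 1 + 1 = m₀ by omega] at hh
      simpa using hh
    have hTub : T m₀ < 1 / (β + 1) := by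
      rw [hTm₀']
      have he : β/(β+1) = 1 - 1/(β+1) := by field_simp; ring
      linarith [hub, he.ge, he.le]
    have hzero : dig β x m₀ = 0 := by
      rw [hdig]
      apply Int.floor_eq_zero_iff.mpr
      rw [Set.mem_Ico]
      constructor
      · have hβ0 : (0:ℝ) < β := by linarith
        have h1 : β * T m₀ < β * (1/(β+1)) := mul_lt_mul_of_pos_left hTub hβ0
        have h2 : β * (1/(β+1)) = β/(β+1) := by ring
        linarith
      · have : -β * T m₀ < 0 := by nlinarith
        have : β / (β+1) < 1 := by rw [div_lt_one hβ1]; linarith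
        linarith
    exact hm₀ne hzero
  · -- m₀ odd: contradicts h
    obtain ⟨r, hr⟩ := hodd
    have hevenm : Even (m₀ - 1) := ⟨r, by omega⟩
    have hTneg : T m₀ < 0 := by
      rw [hTm₀, hevenm.neg_pow]
      exact mul_neg_of_pos_of_neg (pow_pos (by linarith) _) hc
    have harg : 0 < -β * T m₀ + β / (β + 1) := by
      have : 0 < -β * T m₀ := by nlinarith
      have : 0 < β / (β+1) := div_pos (by linarith) hβ1
      positivity
    have hge1 : 1 ≤ dig β x m₀ := by
      have h0 : 0 ≤ dig β x m₀ := by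
        rw [hdig]; exact Int.floor_nonneg.mpr harg.le
      omega
    have hi := h (r+1) (by omega)
    rw [show 2 * (r+1) = m₀ + 1 by omega, hd (m₀+1) (by omega),
        hd 1 le_rfl, show m₀ + 1 - 1 = m₀ by omega] at hi
    simp only [show (1:ℕ) - 1 = 0 from rfl, hd1] at hi
    omega
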